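/- Let $Q$ be an indeterminate, $n \geq 1$, and suppose $N : \mathbb{N} \to \mathbb{Q}(Q)$ satisfies the recursion $\sum_{k=0}^{d} N_{d-k}\,(Q^{k+1} - 1) = Q^{(n+1)(d+1)} - 1$ for all $d \geq 0$. Then in the formal power series ring $\mathbb{Q}(Q)[[z]]$ one has $\sum_{d \geq 0} N_d z^d = \frac{1 - Q^{n+1}}{1 - Q} \cdot \frac{1 - Qz}{1 - Q^{n+1} z}$. -/

import Mathlib

open PowerSeries

/-- generating function of the recursion counting coprime tuples of forms. -/
theorem stmt_0 (n : ℕ) (hn : 1 ≤ n) (N : ℕ → RatFunc ℚ)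
    (Q : RatFunc ℚ) (hQ : Q = RatFunc.X)
    (hrec : ∀ d : ℕ, ∑ k ∈ Finset.range (d + 1), N (d - k) * (Q ^ (k + 1) - 1)
      = Q ^ ((n + 1) * (d + 1)) - 1) :
    (PowerSeries.mk N) * C (1 - Q) * (1 - C (Q ^ (n + 1)) * X)
      = C (1 - Q ^ (n + 1)) * (1 - C Q * X) := by
  have hQ1 : Q - 1 ≠ 0 := by
    rw [hQ, sub_ne_zero]
    intro h
    have h2 : (Polynomial.X : Polynomial ℚ) = 1 := by
      apply RatFunc.algebraMap_injective ℚ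
      simpa [RatFunc.algebraMap_X] using h
    have := Polynomial.natDegree_X (R := ℚ)
    rw [h2] at this
    simp at this
  set T : ℕ → RatFunc ℚ := fun d => ∑ k ∈ Finset.range (d + 1), N (d - k) * Q ^ k with hT
  have hT0 : (Q - 1) * T 0 = Q ^ (n + 1) - 1 := by
    have h0 := hrec 0
    simp only [Finset.sum_range_one, pow_one, Nat.sub_zero, zero_add, mul_one] at h0
    simp only [hT, Finset.sum_range_one, pow_zero, mul_one, Nat.sub_zero, zero_add]
    linear_combination h0
  have hTsucc : ∀ d : ℕ, T (d + 1) = N (d + 1) + Q * T d := by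
    intro d
    simp only [hT]
    rw [Finset.sum_range_succ' (fun k => N (d + 1 - k) * Q ^ k) (d + 1), Finset.mul_sum]
    rw [add_comm]
    congr 1
    · simp
    · refine Finset.sum_congr rfl fun i _ => ?_
      rw [Nat.succ_sub_succ]
      ring
  have hSdiff : ∀ d : ℕ,
      ∑ k ∈ Finset.range (d + 1 + 1), N (d + 1 - k) * (Q ^ (k + 1) - 1)
        = (∑ k ∈ Finset.range (d + 1), N (d - k) * (Q ^ (k + 1) - 1))
          + (Q - 1) * T (d + 1) := by
    intro d
    have step : ∀ i ∈ Finset.range (d + 1),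
        N (d + 1 - (i + 1)) * (Q ^ (i + 1 + 1) - 1)
          = N (d - i) * (Q ^ (i + 1) - 1) + (Q - 1) * Q * (N (d - i) * Q ^ i) := by
      intro i _
      rw [Nat.succ_sub_succ]
      ring
    rw [Finset.sum_range_succ' (fun k => N (d + 1 - k) * (Q ^ (k + 1) - 1)) (d + 1),
      Finset.sum_congr rfl step, Finset.sum_add_distrib, hTsucc]
    simp only [hT, Nat.sub_zero]
    rw [← Finset.mul_sum]
    ring
  have hTval : ∀ d : ℕ, (Q - 1) * T d = Q ^ ((n + 1) * d) * (Q ^ (n + 1) - 1) := by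
    intro d
    cases d with
    | zero => simpa using hT0
    | succ d =>
      have h1 := hrec (d + 1)
      have h2 := hrec d
      rw [hSdiff d, h2] at h1
      rw [show (n + 1) * (d + 1 + 1) = (n + 1) * (d + 1) + (n + 1) from by ring, pow_add] at h1
      linear_combination h1
  have hN0 : (Q - 1) * N 0 = Q ^ (n + 1) - 1 := by
    have h := hT0
    simp only [hT, zero_add, Finset.sum_range_one, pow_zero, mul_one, Nat.sub_zero] at h
    exact h
  have hNsucc : ∀ d : ℕ, (Q - 1) * N (d + 1)
      = Q ^ ((n + 1) * d) * (Q ^ (n + 1) - 1) * (Q ^ (n + 1) - Q) := by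
    intro d
    have h1 := hTval (d + 1)
    have h2 := hTval d
    rw [hTsucc] at h1
    rw [show (n + 1) * (d + 1) = (n + 1) * d + (n + 1) from by ring, pow_add] at h1
    linear_combination h1 - Q * h2
  have hNrec : ∀ d : ℕ, N (d + 2) = Q ^ (n + 1) * N (d + 1) := by
    intro d
    apply mul_left_cancel₀ hQ1
    have h1 := hNsucc (d + 1)
    have h2 := hNsucc d
    rw [show (n + 1) * (d + 1) = (n + 1) * d + (n + 1) from by ring, pow_add] at h1
    linear_combination h1 - Q ^ (n + 1) * h2
  have expand : ∀ (f : PowerSeries (RatFunc ℚ)) (b : RatFunc ℚ),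
      f * (1 - C b * X) = f - (f * C b) * X := by
    intro f b
    ring
  rw [expand, expand]
  ext d
  cases d with
  | zero =>
    rw [LinearMap.map_sub, LinearMap.map_sub, coeff_zero_mul_X, coeff_zero_mul_X,
      coeff_mul_C, coeff_mk, coeff_zero_C]
    linear_combination -hN0
  | succ d =>
    rw [LinearMap.map_sub, LinearMap.map_sub, coeff_succ_mul_X, coeff_succ_mul_X,
      coeff_mul_C, coeff_mul_C, coeff_mul_C, coeff_mk, coeff_mk, ← map_mul, coeff_C, coeff_C]
    rw [if_neg (Nat.succ_ne_zero d)]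
    cases d with
    | zero =>
      rw [if_pos rfl, zero_sub]
      linear_combination -(hNsucc 0) + Q ^ (n + 1) * hN0
    | succ d =>
      rw [if_neg (Nat.succ_ne_zero d), sub_zero]
      linear_combination (1 - Q) * hNrec d
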